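/- For the second-order Winfree model with inertia, suppose $\sup_{t\in[0,T]}\mathcal{D}(\Theta_t) \le D$ and let $m_0 = \max\{\mathcal{D}(\Omega_0), (\mathcal{D}(\nu)+2\kappa D)/\gamma\}$. Then for all $i,j$ and all $t \in (0,T)$: $\frac{d}{dt}(\omega^{ij}_t + \gamma\theta^{ij}_t) \le \mathcal{D}(\nu) + \frac{2\kappa}{\gamma}m_0 + 3\kappa D^2 - \frac{\kappa}{\gamma}\cos\theta^c_t(1+\cos\theta^c_t)(\omega^{ij}_t + \gamma\theta^{ij}_t)$, where $\theta^{ij} = \theta^i - \theta^j$, $\omega^{ij} = \omega^i - \omega^j$. -/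

import Mathlib

open Real

/-- Diameter of a vector in `ℝ^N`: `𝒟(x) = max_{i,j} |x^i - x^j|`. -/
noncomputable def vdiam {N : ℕ} (x : Fin N → ℝ) : ℝ := ⨆ i, ⨆ j, |x i - x j|

lemma abs_sub_le_vdiam {N : ℕ} (x : Fin N → ℝ) (i j : Fin N) :
    |x i - x j| ≤ vdiam x := by
  have h1 : BddAbove (Set.range fun j => |x i - x j|) := Set.Finite.bddAbove (Set.finite_range _)
  have h2 : BddAbove (Set.range fun i => ⨆ j, |x i - x j|) := Set.Finite.bddAbove (Set.finite_range _)
  exact le_trans (le_ciSup h1 j) (le_ciSup h2 i)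

lemma abs_sub_avg_le {N : ℕ} (hN : 0 < N) (x : Fin N → ℝ) (c D : ℝ)
    (h : ∀ k, |c - x k| ≤ D) : |c - (∑ k, x k) / N| ≤ D := by
  have hN' : (0:ℝ) < N := by exact_mod_cast hN
  have heq : c - (∑ k, x k) / N = (∑ k : Fin N, (c - x k)) / N := by
    rw [Finset.sum_sub_distrib]
    field_simp
    simp only [Finset.sum_const, Finset.card_univ, Fintype.card_fin, nsmul_eq_mul]
    ring
  rw [heq, abs_div, abs_of_pos hN', div_le_iff₀ hN']
  calc |∑ k : Fin N, (c - x k)| ≤ ∑ k : Fin N, |c - x k| := Finset.abs_sum_le_sum_abs _ _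
    _ ≤ ∑ _k : Fin N, D := Finset.sum_le_sum fun k _ => h k
    _ = D * N := by simp [mul_comm]

lemma sin_mvt (a b : ℝ) : ∃ ξ, min a b ≤ ξ ∧ ξ ≤ max a b ∧
    Real.sin a - Real.sin b = Real.cos ξ * (a - b) := by
  rcases lt_trichotomy a b with h | h | h
  · obtain ⟨ξ, hξ, hc⟩ := exists_hasDerivAt_eq_slope Real.sin Real.cos h
      (Real.continuous_sin.continuousOn) (fun x _ => Real.hasDerivAt_sin x)
    refine ⟨ξ, le_trans (min_le_left _ _) hξ.1.le, le_trans hξ.2.le (le_max_right _ _), ?_⟩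
    rw [hc, div_mul_eq_mul_div, eq_div_iff (by linarith : b - a ≠ 0)]
    ring
  · exact ⟨a, min_le_left _ _, le_max_left _ _, by simp [h]⟩
  · obtain ⟨ξ, hξ, hc⟩ := exists_hasDerivAt_eq_slope Real.sin Real.cos h
      (Real.continuous_sin.continuousOn) (fun x _ => Real.hasDerivAt_sin x)
    refine ⟨ξ, le_trans (min_le_right _ _) hξ.1.le, le_trans hξ.2.le (le_max_left _ _), ?_⟩
    rw [hc, div_mul_eq_mul_div, eq_div_iff (by linarith : a - b ≠ 0)]

lemma abs_sin_sub_sin (a b : ℝ) : |Real.sin a - Real.sin b| ≤ |a - b| := by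
  obtain ⟨ξ, _, _, hξ⟩ := sin_mvt a b
  rw [hξ, abs_mul]
  calc |Real.cos ξ| * |a - b| ≤ 1 * |a - b| :=
        mul_le_mul_of_nonneg_right (Real.abs_cos_le_one ξ) (abs_nonneg _)
    _ = |a - b| := one_mul _

lemma abs_cos_sub_cos (a b : ℝ) : |Real.cos a - Real.cos b| ≤ |a - b| := by
  have := abs_sin_sub_sin (π / 2 - a) (π / 2 - b)
  rw [Real.sin_pi_div_two_sub, Real.sin_pi_div_two_sub] at this
  calc |Real.cos a - Real.cos b| ≤ |π / 2 - a - (π / 2 - b)| := this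
    _ = |a - b| := by rw [show π / 2 - a - (π / 2 - b) = -(a - b) by ring, abs_neg]

lemma decay_bound (F g : ℝ → ℝ) (γ a T : ℝ) (hγ : 0 < γ) (ha : 0 ≤ a)
    (hF : ∀ t, HasDerivAt F (-γ * F t + g t) t) (hgc : Continuous g)
    (hb : ∀ s ∈ Set.Icc (0:ℝ) T, |g s| ≤ a) :
    ∀ t ∈ Set.Icc (0:ℝ) T, |F t| ≤ max |F 0| (a / γ) := by
  intro t ht
  set M := max |F 0| (a / γ) with hM
  have hM0 : 0 ≤ M := le_trans (abs_nonneg _) (le_max_left _ _)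
  have hG : ∀ s, HasDerivAt (fun u => Real.exp (γ * u) * F u) (Real.exp (γ * s) * g s) s := by
    intro s
    have he : HasDerivAt (fun u => Real.exp (γ * u)) (γ * Real.exp (γ * s)) s := by
      simpa [mul_comm, Function.comp_def] using (Real.hasDerivAt_exp (γ * s)).comp s ((hasDerivAt_id s).const_mul γ)
    have h2 := he.mul (hF s)
    refine h2.congr_deriv ?_
    ring
  have hcont : Continuous fun s => Real.exp (γ * s) * g s :=
    (Real.continuous_exp.comp (continuous_const.mul continuous_id)).mul hgc
  have hFTC : ∫ s in (0:ℝ)..t, Real.exp (γ * s) * g s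
      = Real.exp (γ * t) * F t - Real.exp (γ * 0) * F 0 :=
    intervalIntegral.integral_eq_sub_of_hasDerivAt (fun s _ => hG s) (hcont.intervalIntegrable 0 t)
  have ht0 : 0 ≤ t := ht.1
  have haint : ∫ s in (0:ℝ)..t, Real.exp (γ * s) * a
      = a / γ * Real.exp (γ * t) - a / γ * Real.exp (γ * 0) := by
    apply intervalIntegral.integral_eq_sub_of_hasDerivAt (f := fun u => a / γ * Real.exp (γ * u))
    · intro s _
      have he : HasDerivAt (fun u => Real.exp (γ * u)) (γ * Real.exp (γ * s)) s := by
        simpa [mul_comm, Function.comp_def] using (Real.hasDerivAt_exp (γ * s)).comp s ((hasDerivAt_id s).const_mul γ)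
      have h2 := he.const_mul (a / γ)
      refine h2.congr_deriv ?_
      field_simp
    · exact (((Real.continuous_exp.comp (continuous_const.mul continuous_id)).mul
        continuous_const).intervalIntegrable 0 t)
  have hint : |∫ s in (0:ℝ)..t, Real.exp (γ * s) * g s|
      ≤ a / γ * (Real.exp (γ * t) - 1) := by
    have h1 : ‖∫ s in (0:ℝ)..t, Real.exp (γ * s) * g s‖
        ≤ |∫ s in (0:ℝ)..t, Real.exp (γ * s) * a| := by
      apply intervalIntegral.norm_integral_le_abs_of_norm_le
      · rw [Set.uIoc_of_le ht0]
        filter_upwards [MeasureTheory.ae_restrict_mem measurableSet_Ioc] with s hs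
        have hsT : s ∈ Set.Icc (0:ℝ) T := ⟨hs.1.le, hs.2.trans ht.2⟩
        have := hb s hsT
        rw [Real.norm_eq_abs, abs_mul, abs_of_pos (Real.exp_pos _)]
        exact mul_le_mul_of_nonneg_left this (Real.exp_pos _).le
      · exact (((Real.continuous_exp.comp (continuous_const.mul continuous_id)).mul
          continuous_const).intervalIntegrable 0 t)
    rw [Real.norm_eq_abs] at h1
    refine h1.trans ?_
    rw [haint, mul_zero, Real.exp_zero]
    have he1 : (1:ℝ) ≤ Real.exp (γ * t) := Real.one_le_exp (by positivity)
    have hag : (0:ℝ) ≤ a / γ := by positivity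
    have hnn : (0:ℝ) ≤ a / γ * Real.exp (γ * t) - a / γ * 1 := by nlinarith
    rw [abs_of_nonneg hnn]
    linarith [le_of_eq (by ring : a / γ * Real.exp (γ * t) - a / γ * 1
      = a / γ * (Real.exp (γ * t) - 1))]
  have hmain : Real.exp (γ * t) * |F t| ≤ Real.exp (γ * t) * M := by
    have h0 : Real.exp (γ * t) * F t = F 0 + ∫ s in (0:ℝ)..t, Real.exp (γ * s) * g s := by
      rw [hFTC]; simp
    have h1 : Real.exp (γ * t) * |F t| = |Real.exp (γ * t) * F t| := by
      rw [abs_mul, abs_of_pos (Real.exp_pos _)]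
    rw [h1, h0]
    have h2 : |F 0| ≤ M := le_max_left _ _
    have h3 : a / γ ≤ M := le_max_right _ _
    have h4 : (0:ℝ) ≤ Real.exp (γ * t) - 1 := by
      have := Real.one_le_exp (by positivity : (0:ℝ) ≤ γ * t); linarith
    calc |F 0 + ∫ s in (0:ℝ)..t, Real.exp (γ * s) * g s|
        ≤ |F 0| + |∫ s in (0:ℝ)..t, Real.exp (γ * s) * g s| := abs_add_le _ _
      _ ≤ M + a / γ * (Real.exp (γ * t) - 1) := add_le_add h2 hint
      _ ≤ M + M * (Real.exp (γ * t) - 1) := by nlinarith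
      _ = Real.exp (γ * t) * M := by ring
  exact le_of_mul_le_mul_left hmain (Real.exp_pos _)

lemma final_arith (K γ vν m₀ D nij w x c e cξ : ℝ) (hK : 0 ≤ K) (hγ : 0 ≤ γ)
    (hv : nij ≤ vν) (p1 : c * (1 + c) * w ≤ 2 * m₀)
    (p2 : x * (c * (1 + c) - (1 + e) * cξ) ≤ 3 * D ^ 2) :
    nij - (K * γ) * (1 + e) * cξ * x
      ≤ vν + 2 * K * m₀ + 3 * (K * γ) * D ^ 2 - K * c * (1 + c) * (w + γ * x) := by
  nlinarith [mul_le_mul_of_nonneg_left p1 hK, mul_le_mul_of_nonneg_left p2 (mul_nonneg hK hγ)]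
/-- Differential inequality for `ω^{ij} + γθ^{ij}` for the
second-order Winfree model with inertia, under the a priori phase-diameter
bound `𝒟(Θ_t) ≤ D` on `[0,T]`, with `m₀ = max{𝒟(Ω₀), (𝒟(ν)+2κD)/γ}`. -/
theorem stmt7 (N : ℕ) (hN : 0 < N) (θ ω : Fin N → ℝ → ℝ) (ν : Fin N → ℝ)
    (γ κ : ℝ) (hγ : 0 < γ) (hκ : 0 ≤ κ)
    (hθ : ∀ i, ∀ t : ℝ, HasDerivAt (θ i) (ω i t) t)
    (hω : ∀ i, ∀ t : ℝ, HasDerivAt (ω i)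
      (-γ * ω i t + ν i - κ / N * Real.sin (θ i t) * ∑ j, (1 + Real.cos (θ j t))) t)
    (T D : ℝ) (hT : 0 < T) (hD : 0 < D)
    (hsup : ∀ t ∈ Set.Icc (0:ℝ) T, vdiam (fun i => θ i t) ≤ D)
    (m₀ : ℝ) (hm₀ : m₀ = max (vdiam (fun i => ω i 0)) ((vdiam ν + 2 * κ * D) / γ)) :
    ∀ i j, ∀ t ∈ Set.Ioo (0:ℝ) T, ∃ d : ℝ,
      HasDerivAt (fun s => (ω i s - ω j s) + γ * (θ i s - θ j s)) d t ∧
      d ≤ vdiam ν + 2 * κ / γ * m₀ + 3 * κ * D ^ 2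
          - κ / γ * Real.cos ((∑ k, θ k t) / N) * (1 + Real.cos ((∑ k, θ k t) / N)) *
            ((ω i t - ω j t) + γ * (θ i t - θ j t)) := by
  intro i j t ht
  have hNR : (0:ℝ) < N := by exact_mod_cast hN
  have htIcc : t ∈ Set.Icc (0:ℝ) T := ⟨ht.1.le, ht.2.le⟩
  -- derivative
  have hd : HasDerivAt (fun s => (ω i s - ω j s) + γ * (θ i s - θ j s))
      ((ν i - ν j) - κ / N * (Real.sin (θ i t) - Real.sin (θ j t))
        * ∑ k, (1 + Real.cos (θ k t))) t := by
    have h1 := ((hω i t).sub (hω j t)).add (((hθ i t).sub (hθ j t)).const_mul γ)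
    refine h1.congr_deriv ?_
    ring
  refine ⟨_, hd, ?_⟩
  -- phase diameter facts at time t
  have habs : ∀ k l : Fin N, |θ k t - θ l t| ≤ D := fun k l =>
    (abs_sub_le_vdiam (fun k => θ k t) k l).trans (hsup t htIcc)
  -- frequency bound via Gronwall
  have hνd : ∀ k l : Fin N, |ν k - ν l| ≤ vdiam ν := fun k l => abs_sub_le_vdiam ν k l
  have hvν0 : 0 ≤ vdiam ν := (abs_nonneg _).trans (hνd i i)
  have hcθ : ∀ k, Continuous (θ k) := fun k =>
    continuous_iff_continuousAt.mpr fun s => (hθ k s).continuousAt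
  have hScont : Continuous fun s => ∑ k, (1 + Real.cos (θ k s)) :=
    continuous_finset_sum _ fun k _ => continuous_const.add (Real.continuous_cos.comp (hcθ k))
  have hSbound : ∀ s : ℝ, 0 ≤ (∑ k, (1 + Real.cos (θ k s))) ∧
      (∑ k, (1 + Real.cos (θ k s))) ≤ 2 * N := by
    intro s
    constructor
    · exact Finset.sum_nonneg fun k _ => by nlinarith [Real.neg_one_le_cos (θ k s)]
    · calc (∑ k, (1 + Real.cos (θ k s))) ≤ ∑ _k : Fin N, (2:ℝ) :=
          Finset.sum_le_sum fun k _ => by nlinarith [Real.cos_le_one (θ k s)]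
        _ = 2 * N := by simp [mul_comm]
  have hwb : |ω i t - ω j t| ≤ m₀ := by
    have hF : ∀ s, HasDerivAt (fun u => ω i u - ω j u)
        (-γ * (ω i s - ω j s) + ((ν i - ν j) - κ / N
          * (Real.sin (θ i s) - Real.sin (θ j s)) * ∑ k, (1 + Real.cos (θ k s)))) s := by
      intro s
      have h1 := (hω i s).sub (hω j s)
      refine h1.congr_deriv ?_
      ring
    have hgc : Continuous fun s => (ν i - ν j) - κ / N
        * (Real.sin (θ i s) - Real.sin (θ j s)) * ∑ k, (1 + Real.cos (θ k s)) :=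
      continuous_const.sub (((continuous_const.mul
        ((Real.continuous_sin.comp (hcθ i)).sub (Real.continuous_sin.comp (hcθ j)))).mul hScont))
    have hb : ∀ s ∈ Set.Icc (0:ℝ) T, |(ν i - ν j) - κ / N
        * (Real.sin (θ i s) - Real.sin (θ j s)) * ∑ k, (1 + Real.cos (θ k s))|
        ≤ vdiam ν + 2 * κ * D := by
      intro s hs
      have h1 : |Real.sin (θ i s) - Real.sin (θ j s)| ≤ D :=
        (abs_sin_sub_sin _ _).trans ((abs_sub_le_vdiam (fun k => θ k s) i j).trans (hsup s hs))
      obtain ⟨hS0, hS2⟩ := hSbound s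
      have h2 : |κ / N * (Real.sin (θ i s) - Real.sin (θ j s))
          * ∑ k, (1 + Real.cos (θ k s))| ≤ 2 * κ * D := by
        rw [abs_mul, abs_mul, abs_of_nonneg (by positivity : (0:ℝ) ≤ κ / N),
          abs_of_nonneg hS0]
        calc κ / N * |Real.sin (θ i s) - Real.sin (θ j s)| * (∑ k, (1 + Real.cos (θ k s)))
            ≤ κ / N * D * (2 * N) := by
              apply mul_le_mul (mul_le_mul_of_nonneg_left h1 (by positivity)) hS2 hS0
              positivity
          _ = 2 * κ * D := by field_simp
      calc |(ν i - ν j) - κ / N * (Real.sin (θ i s) - Real.sin (θ j s))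
            * ∑ k, (1 + Real.cos (θ k s))|
          ≤ |ν i - ν j| + |κ / N * (Real.sin (θ i s) - Real.sin (θ j s))
            * ∑ k, (1 + Real.cos (θ k s))| := abs_sub _ _
        _ ≤ vdiam ν + 2 * κ * D := add_le_add (hνd i j) h2
    have := decay_bound (fun u => ω i u - ω j u) _ γ (vdiam ν + 2 * κ * D) T hγ
      (by positivity) hF hgc hb t htIcc
    refine this.trans ?_
    rw [hm₀]
    exact max_le_max (abs_sub_le_vdiam (fun k => ω k 0) i j) le_rfl
  -- MVT for sin
  obtain ⟨ξ, hξ1, hξ2, hξeq⟩ := sin_mvt (θ i t) (θ j t)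
  have hξk : ∀ k, |ξ - θ k t| ≤ D := by
    intro k
    have hik := abs_le.mp (habs i k)
    have hjk := abs_le.mp (habs j k)
    rw [abs_le]
    constructor
    · have : θ k t - D ≤ min (θ i t) (θ j t) := le_min (by linarith [hik.2]) (by linarith [hjk.2])
      linarith [le_trans this hξ1]
    · have : max (θ i t) (θ j t) ≤ θ k t + D := max_le (by linarith [hik.1]) (by linarith [hjk.1])
      linarith [le_trans hξ2 this]
  set θc := (∑ k, θ k t) / (N:ℝ) with hθcdef
  have hξc : |ξ - θc| ≤ D := abs_sub_avg_le hN (fun k => θ k t) ξ D hξk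
  have hθkc : ∀ k, |θ k t - θc| ≤ D := fun k =>
    abs_sub_avg_le hN (fun l => θ l t) (θ k t) D (fun l => habs k l)
  -- cosine comparisons
  set c := Real.cos θc with hcdef
  set E := (∑ k, Real.cos (θ k t)) / (N:ℝ) with hEdef
  have hcξ : |c - Real.cos ξ| ≤ D := by
    calc |c - Real.cos ξ| ≤ |θc - ξ| := abs_cos_sub_cos _ _
      _ = |ξ - θc| := abs_sub_comm _ _
      _ ≤ D := hξc
  have hcE : |c - E| ≤ D := by
    apply abs_sub_avg_le hN (fun k => Real.cos (θ k t)) c D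
    intro k
    calc |c - Real.cos (θ k t)| ≤ |θc - θ k t| := abs_cos_sub_cos _ _
      _ = |θ k t - θc| := abs_sub_comm _ _
      _ ≤ D := hθkc k
  have hE1 : |E| ≤ 1 := by
    rw [hEdef, abs_div, abs_of_pos hNR, div_le_one hNR]
    calc |∑ k, Real.cos (θ k t)| ≤ ∑ k : Fin N, |Real.cos (θ k t)| :=
          Finset.abs_sum_le_sum_abs _ _
      _ ≤ ∑ _k : Fin N, (1:ℝ) := Finset.sum_le_sum fun k _ => Real.abs_cos_le_one _
      _ = N := by simp
  -- rewrite the derivative value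
  have hSval : (∑ k, (1 + Real.cos (θ k t))) = N * (1 + E) := by
    rw [Finset.sum_add_distrib, Finset.sum_const, Finset.card_univ, Fintype.card_fin, hEdef]
    field_simp
    simp
  have hdval : (ν i - ν j) - κ / N * (Real.sin (θ i t) - Real.sin (θ j t))
      * ∑ k, (1 + Real.cos (θ k t))
      = (ν i - ν j) - (κ / γ * γ) * (1 + E) * Real.cos ξ * (θ i t - θ j t) := by
    rw [hξeq, hSval, div_mul_cancel₀ κ hγ.ne']
    field_simp
  rw [hdval]
  -- the two product bounds
  have hc1 : |c| ≤ 1 := Real.abs_cos_le_one _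
  have hm0nn : 0 ≤ m₀ := le_trans (abs_nonneg _) hwb
  have p1 : c * (1 + c) * (ω i t - ω j t) ≤ 2 * m₀ := by
    calc c * (1 + c) * (ω i t - ω j t) ≤ |c * (1 + c) * (ω i t - ω j t)| := le_abs_self _
      _ = |c| * |1 + c| * |ω i t - ω j t| := by rw [abs_mul, abs_mul]
      _ ≤ 1 * 2 * m₀ := by
          have h1c : |1 + c| ≤ 2 := by
            have := abs_le.mp hc1
            rw [abs_le]; constructor <;> linarith
          gcongr
      _ = 2 * m₀ := by ring
  have p2 : (θ i t - θ j t) * (c * (1 + c) - (1 + E) * Real.cos ξ) ≤ 3 * D ^ 2 := by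
    have key : |c * (1 + c) - (1 + E) * Real.cos ξ| ≤ 3 * D := by
      have heq : c * (1 + c) - (1 + E) * Real.cos ξ
          = (c - Real.cos ξ) * (1 + E) + c * (c - E) := by ring
      rw [heq]
      have h1E : |1 + E| ≤ 2 := by
        have := abs_le.mp hE1
        rw [abs_le]; constructor <;> linarith
      calc |(c - Real.cos ξ) * (1 + E) + c * (c - E)|
          ≤ |(c - Real.cos ξ) * (1 + E)| + |c * (c - E)| := abs_add_le _ _
        _ = |c - Real.cos ξ| * |1 + E| + |c| * |c - E| := by rw [abs_mul, abs_mul]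
        _ ≤ D * 2 + 1 * D := add_le_add
            (mul_le_mul hcξ h1E (abs_nonneg _) hD.le)
            (mul_le_mul hc1 hcE (abs_nonneg _) zero_le_one)
        _ = 3 * D := by ring
    calc (θ i t - θ j t) * (c * (1 + c) - (1 + E) * Real.cos ξ)
        ≤ |(θ i t - θ j t) * (c * (1 + c) - (1 + E) * Real.cos ξ)| := le_abs_self _
      _ = |θ i t - θ j t| * |c * (1 + c) - (1 + E) * Real.cos ξ| := abs_mul _ _
      _ ≤ D * (3 * D) := mul_le_mul (habs i j) key (abs_nonneg _) hD.le
      _ = 3 * D ^ 2 := by ring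
  have hfin := final_arith (κ / γ) γ (vdiam ν) m₀ D (ν i - ν j) (ω i t - ω j t)
    (θ i t - θ j t) c E (Real.cos ξ) (by positivity) hγ.le
    ((le_abs_self _).trans (hνd i j)) p1 p2
  have hκγ : κ / γ * γ = κ := div_mul_cancel₀ κ hγ.ne'
  calc (ν i - ν j) - (κ / γ * γ) * (1 + E) * Real.cos ξ * (θ i t - θ j t)
      ≤ vdiam ν + 2 * (κ / γ) * m₀ + 3 * (κ / γ * γ) * D ^ 2
        - κ / γ * c * (1 + c) * ((ω i t - ω j t) + γ * (θ i t - θ j t)) := hfin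
    _ = vdiam ν + 2 * κ / γ * m₀ + 3 * κ * D ^ 2
        - κ / γ * c * (1 + c) * ((ω i t - ω j t) + γ * (θ i t - θ j t)) := by
        rw [hκγ]; ring
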